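/- Let K be a field of characteristic 0, U a nonempty finite subset of ℤ, and V ⊆ U with |V| = 2d and d ≤ k. For any matching M ∈ M(V,d) of the complete graph on V consisting of d edges, the partial derivative ∂^M Φ_{U,k} equals Φ_{U∖V, k−d}. -/

import Mathlib

open MvPolynomial Finset

noncomputable section

/-- The set of matchings with exactly `k` edges of the complete graph on vertex set `V ⊆ ℤ`:
sets of `k` pairwise disjoint 2-element subsets of `V`. -/
def matchings (V : Finset ℤ) (k : ℕ) : Finset (Finset (Finset ℤ)) :=
  (V.powersetCard 2).powerset.filter fun M =>
    M.card = k ∧ ∀ e ∈ M, ∀ f ∈ M, e ≠ f → Disjoint e f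

/-- `S` is a matching of the complete graph on vertex set `V`. -/
def IsMatching (V : Finset ℤ) (S : Finset (Finset ℤ)) : Prop :=
  S ⊆ V.powersetCard 2 ∧ ∀ e ∈ S, ∀ f ∈ S, e ≠ f → Disjoint e f

/-- The weighted generating function `Φ_{V,k} = Σ_{M ∈ M(V,k)} x^M` of `k`-edge matchings,
an element of the polynomial ring with variables indexed by (potential) edges. -/
def Phi (K : Type*) [Field K] (V : Finset ℤ) (k : ℕ) : MvPolynomial (Finset ℤ) K :=
  ∑ M ∈ matchings V k, ∏ e ∈ M, X e

/-- The differential operator `∂^S = Π_{i ∈ S} ∂/∂x_i` applied to `p`. -/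
def dset {K : Type*} [CommSemiring K] {ι : Type*} [DecidableEq ι]
    (S : Finset ι) (p : MvPolynomial ι K) : MvPolynomial ι K :=
  S.toList.foldr (fun i q => pderiv i q) p

/-- The differential operator `∂^m = Π_i (∂/∂x_i)^{m i}` of a monomial exponent `m`. -/
def dmon {K : Type*} [CommSemiring K] {ι : Type*} [DecidableEq ι]
    (m : ι →₀ ℕ) (p : MvPolynomial ι K) : MvPolynomial ι K :=
  m.support.toList.foldr (fun i q => (⇑(pderiv (R := K) i))^[m i] q) p

/-- The linear map `f ↦ f(∂)Φ`, where `f(∂)` is obtained from `f` by substituting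
`∂/∂x_i` for `x_i`. -/
def diffOp (K : Type*) [Field K] {ι : Type*} [DecidableEq ι]
    (Φ : MvPolynomial ι K) : MvPolynomial ι K →ₗ[K] MvPolynomial ι K :=
  (basisMonomials ι K).constr K fun m => dmon m Φ

/-- The annihilator `Ann(Φ) = {f : f(∂)Φ = 0}`. -/
def Ann (K : Type*) [Field K] {ι : Type*} [DecidableEq ι]
    (Φ : MvPolynomial ι K) : Submodule K (MvPolynomial ι K) :=
  LinearMap.ker (diffOp K Φ)

/-- The canonical matching `M(V) = {{v₁,v₂},{v₃,v₄},…}` on `V = {v₁ < v₂ < ⋯}`. -/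
def canonMatching (V : Finset ℤ) : Finset (Finset ℤ) :=
  (Finset.range (V.card / 2)).image fun i =>
    ({(V.sort (· ≤ ·)).getD (2 * i) 0, (V.sort (· ≤ ·)).getD (2 * i + 1) 0} : Finset ℤ)

/-- The `n`-th elementary symmetric polynomial in the variables indexed by `U`. -/
def elemSymm (K : Type*) [Field K] {ι : Type*} (U : Finset ι) (n : ℕ) : MvPolynomial ι K :=
  ∑ S ∈ U.powersetCard n, ∏ i ∈ S, X i

end

section Aux

variable {K : Type*} [CommSemiring K] {ι : Type*} [DecidableEq ι]

lemma pderiv_prod_X (i : ι) (N : Finset ι) :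
    pderiv i (∏ e ∈ N, (X e : MvPolynomial ι K)) =
      if i ∈ N then ∏ e ∈ N.erase i, X e else 0 := by
  induction N using Finset.induction_on with
  | empty => simp
  | @insert a s ha ih =>
    rw [Finset.prod_insert ha, Derivation.leibniz, ih]
    by_cases hia : i = a
    · subst hia
      simp [ha, Finset.erase_insert ha, smul_eq_mul]
    · rw [pderiv_X_of_ne (fun h => hia h.symm), smul_zero, add_zero, smul_eq_mul]
      by_cases his : i ∈ s
      · rw [if_pos his, if_pos (Finset.mem_insert_of_mem his),
          Finset.erase_insert_of_ne (fun h => hia h.symm),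
          Finset.prod_insert (fun h => ha (Finset.mem_of_mem_erase h))]
      · rw [if_neg his, mul_zero, if_neg (by
          simp only [Finset.mem_insert]
          tauto)]

lemma foldr_pderiv_prod_X (l : List ι) (hl : l.Nodup) (N : Finset ι) :
    l.foldr (fun i q => pderiv i q) (∏ e ∈ N, (X e : MvPolynomial ι K)) =
      if l.toFinset ⊆ N then ∏ e ∈ N \ l.toFinset, X e else 0 := by
  induction l with
  | nil => simp
  | cons a l ih =>
    obtain ⟨hal, hln⟩ := List.nodup_cons.mp hl
    simp only [List.foldr_cons, ih hln]
    by_cases h : l.toFinset ⊆ N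
    · rw [if_pos h, pderiv_prod_X]
      by_cases haN : a ∈ N
      · have haN' : a ∈ N \ l.toFinset :=
          Finset.mem_sdiff.mpr ⟨haN, fun h' => hal (List.mem_toFinset.mp h')⟩
        rw [if_pos haN', if_pos (by
          simp only [List.toFinset_cons]
          exact Finset.insert_subset haN h)]
        congr 1
        ext x
        simp only [Finset.mem_erase, Finset.mem_sdiff, List.toFinset_cons,
          Finset.mem_insert, List.mem_toFinset]
        tauto
      · rw [if_neg (fun h' => haN (Finset.mem_sdiff.mp h').1), if_neg (by
          simp only [List.toFinset_cons]
          intro hsub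
          exact haN (hsub (Finset.mem_insert_self a _)))]
    · rw [if_neg h, map_zero, if_neg (by
        simp only [List.toFinset_cons]
        intro hsub
        exact h (Finset.Subset.trans (Finset.subset_insert a _) hsub))]

lemma dset_prod_X (M N : Finset ι) :
    dset M (∏ e ∈ N, (X e : MvPolynomial ι K)) =
      if M ⊆ N then ∏ e ∈ N \ M, X e else 0 := by
  have := foldr_pderiv_prod_X (K := K) M.toList M.nodup_toList N
  rwa [Finset.toList_toFinset] at this

lemma dset_sum {α : Type*} (M : Finset ι) (t : Finset α) (f : α → MvPolynomial ι K) :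
    dset M (∑ a ∈ t, f a) = ∑ a ∈ t, dset M (f a) := by
  unfold dset
  induction M.toList with
  | nil => simp
  | cons a l ih => simp [ih, map_sum]

end Aux

/-- for `V ⊆ U` with `|V| = 2d`, `d ≤ k`, and any matching `M ∈ M(V,d)`,
`∂^M Φ_{U,k} = Φ_{U∖V, k−d}`. -/
theorem dset_matching_Phi {K : Type*} [Field K] [CharZero K]
    (U V : Finset ℤ) (hU : U.Nonempty) (hVU : V ⊆ U) (d k : ℕ)
    (hVcard : V.card = 2 * d) (hdk : d ≤ k)
    (M : Finset (Finset ℤ)) (hM : M ∈ matchings V d) :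
    dset M (Phi K U k) = Phi K (U \ V) (k - d) := by
  classical
  have mem_m : ∀ (W : Finset ℤ) (n : ℕ) (S : Finset (Finset ℤ)),
      S ∈ matchings W n ↔ S ⊆ W.powersetCard 2 ∧ S.card = n ∧
        ∀ e ∈ S, ∀ f ∈ S, e ≠ f → Disjoint e f := by
    intro W n S
    simp only [matchings, Finset.mem_filter, Finset.mem_powerset, and_assoc]
  obtain ⟨hMsub, hMcard, hMdisj⟩ := (mem_m V d M).mp hM
  have hedge : ∀ e ∈ M, e ⊆ V ∧ e.card = 2 := fun e he =>
    Finset.mem_powersetCard.mp (hMsub he)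
  have hcover : M.biUnion id = V := by
    apply Finset.eq_of_subset_of_card_le
    · intro x hx
      obtain ⟨e, he, hxe⟩ := Finset.mem_biUnion.mp hx
      exact (hedge e he).1 hxe
    · rw [Finset.card_biUnion (t := id) (fun e he f hf hef => hMdisj e he f hf hef), hVcard]
      calc 2 * d = ∑ _e ∈ M, 2 := by rw [Finset.sum_const, hMcard, smul_eq_mul, mul_comm]
        _ = ∑ e ∈ M, (id e).card := Finset.sum_congr rfl (fun e he => ((hedge e he).2).symm)
        _ ≤ ∑ e ∈ M, (id e).card := le_rfl
  have hdisjV : ∀ e : Finset ℤ, (∀ f ∈ M, Disjoint e f) → Disjoint e V := by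
    intro e h
    rw [← hcover, Finset.disjoint_biUnion_right]
    exact h
  rw [Phi, dset_sum]
  simp only [dset_prod_X]
  rw [← Finset.sum_filter, Phi]
  apply Finset.sum_nbij' (i := fun N => N \ M) (j := fun N' => N' ∪ M)
  · -- hi
    intro N hN
    rw [Finset.mem_filter] at hN
    obtain ⟨hN, hMN⟩ := hN
    obtain ⟨hNsub, hNcard, hNdisj⟩ := (mem_m U k N).mp hN
    rw [mem_m]
    refine ⟨?_, ?_, ?_⟩
    · intro e he
      rw [Finset.mem_sdiff] at he
      obtain ⟨heN, heM⟩ := he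
      obtain ⟨heU, hecard⟩ := Finset.mem_powersetCard.mp (hNsub heN)
      rw [Finset.mem_powersetCard]
      refine ⟨Finset.subset_sdiff.mpr ⟨heU, ?_⟩, hecard⟩
      exact hdisjV e (fun f hf => hNdisj e heN f (hMN hf) (fun h => heM (h ▸ hf)))
    · rw [Finset.card_sdiff_of_subset hMN, hNcard, hMcard]
    · intro e he f hf
      rw [Finset.mem_sdiff] at he hf
      exact hNdisj e he.1 f hf.1
  · -- hj
    intro N' hN'
    obtain ⟨hN'sub, hN'card, hN'disj⟩ := (mem_m _ _ N').mp hN'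
    have hedge' : ∀ e ∈ N', e ⊆ U \ V ∧ e.card = 2 := fun e he =>
      Finset.mem_powersetCard.mp (hN'sub he)
    have hN'M : Disjoint N' M := by
      rw [Finset.disjoint_left]
      intro e heN' heM
      obtain ⟨heUV, hecard⟩ := hedge' e heN'
      obtain ⟨x, hx⟩ := Finset.card_pos.mp (by omega : 0 < e.card)
      exact (Finset.mem_sdiff.mp (heUV hx)).2 ((hedge e heM).1 hx)
    rw [Finset.mem_filter]
    constructor
    · rw [mem_m]
      refine ⟨?_, ?_, ?_⟩
      · intro e he
        rw [Finset.mem_union] at he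
        rcases he with he | he
        · obtain ⟨heUV, hecard⟩ := hedge' e he
          exact Finset.mem_powersetCard.mpr ⟨heUV.trans (Finset.sdiff_subset), hecard⟩
        · exact Finset.mem_powersetCard.mpr ⟨((hedge e he).1).trans hVU, (hedge e he).2⟩
      · rw [Finset.card_union_of_disjoint hN'M, hN'card, hMcard]
        omega
      · intro e he f hf hef
        rw [Finset.mem_union] at he hf
        rcases he with he | he <;> rcases hf with hf | hf
        · exact hN'disj e he f hf hef
        · exact Finset.disjoint_of_subset_left (hedge' e he).1
            (Finset.disjoint_of_subset_right (hedge f hf).1 Finset.sdiff_disjoint)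
        · exact Finset.disjoint_of_subset_right (hedge' f hf).1
            (Finset.disjoint_of_subset_left (hedge e he).1 Finset.sdiff_disjoint.symm)
        · exact hMdisj e he f hf hef
    · exact Finset.subset_union_right
  · -- left inverse
    intro N hN
    rw [Finset.mem_filter] at hN
    exact Finset.sdiff_union_of_subset hN.2
  · -- right inverse
    intro N' hN'
    obtain ⟨hN'sub, hN'card, hN'disj⟩ := (mem_m _ _ N').mp hN'
    have hN'M : Disjoint N' M := by
      rw [Finset.disjoint_left]
      intro e heN' heM
      obtain ⟨heUV, hecard⟩ := Finset.mem_powersetCard.mp (hN'sub heN')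
      obtain ⟨x, hx⟩ := Finset.card_pos.mp (by omega : 0 < e.card)
      exact (Finset.mem_sdiff.mp (heUV hx)).2 ((hedge e heM).1 hx)
    rw [Finset.union_sdiff_cancel_right hN'M]
  · -- values
    intro N hN
    rfl
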